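/- Let T be a hyponormal bilateral weighted shift on H with nonzero weight sequence (β_n)_{n∈ℤ}. Then T has no eigenvalues; i.e., for every complex number λ, the kernel of λI − T is {0} (equivalently, the point spectrum σ_p(T) is empty). -/

import Mathlib

open Filter
open scoped ENNReal

/-- A hyponormal bilateral weighted shift with nonzero weights has no eigenvalues:
for every `λ`, the kernel of `λI - T` is trivial; equivalently the point spectrum
is empty. -/
theorem pointSpectrum_of_hyponormal_bilateral_weighted_shift_empty
    {H : Type*} [NormedAddCommGroup H] [InnerProductSpace ℂ H] [CompleteSpace H]
    (e : HilbertBasis ℤ ℂ H) (β : ℤ → ℂ) (T : H →L[ℂ] H)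
    (hT : ∀ n : ℤ, T (e n) = β n • e (n + 1))
    (hmono : ∀ n : ℤ, ‖β n‖ ≤ ‖β (n + 1)‖)
    (hnz : ∀ n : ℤ, β n ≠ 0) :
    (∀ lam : ℂ, LinearMap.ker ((lam • (1 : H →L[ℂ] H) - T : H →L[ℂ] H) : H →ₗ[ℂ] H) = ⊥) ∧
      {lam : ℂ | ∃ x : H, x ≠ 0 ∧ T x = lam • x} = ∅ := by
  -- monotonicity of the weight moduli
  have monoβ : ∀ n m : ℤ, n ≤ m → ‖β n‖ ≤ ‖β m‖ := by
    intro n m hnm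
    refine Int.le_induction (motive := fun m _ => ‖β n‖ ≤ ‖β m‖) le_rfl (fun k _ ih => ih.trans (hmono k)) m hnm
  have main : ∀ lam : ℂ, ∀ x : H, T x = lam • x → x = 0 := by
    intro lam x hx
    set a : ℤ → ℂ := fun n => e.repr x n with ha
    -- the coefficient recursion
    have hrel : ∀ m : ℤ, β (m - 1) * a (m - 1) = lam * a m := by
      intro m
      have hs2 : HasSum (fun i : ℤ => (a i * β i) • e (i + 1)) (T x) := by
        have h1 := (e.hasSum_repr x).mapL T
        convert h1 using 2 with i
        rw [map_smul, hT, smul_smul]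
      have h3 := hs2.mapL (innerSL ℂ (e m))
      have h4 : HasSum (fun i : ℤ => if i = m - 1 then β (m - 1) * a (m - 1) else 0)
          ((innerSL ℂ (e m)) (T x)) := by
        convert h3 using 2 with i
        · rfl
        rw [innerSL_apply_apply, inner_smul_right, orthonormal_iff_ite.mp e.orthonormal]
        by_cases h : i = m - 1
        · subst h; rw [if_pos rfl, if_pos (by omega)]; ring
        · have : ¬ m = i + 1 := by omega
          simp [h, this]
      have h5 := (hasSum_ite_eq (m - 1) (β (m - 1) * a (m - 1))).unique h4
      rw [h5, hx]
      simp [inner_smul_right, ← e.repr_apply_apply, ha]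
    by_contra hx0
    -- some coefficient is nonzero
    obtain ⟨n0, hn0⟩ : ∃ n : ℤ, a n ≠ 0 := by
      by_contra hall
      push_neg at hall
      apply hx0
      have : e.repr x = 0 := by
        ext n
        exact hall n
      simpa using congrArg e.repr.symm this
    -- λ = 0 is impossible
    have hlam : lam ≠ 0 := by
      rintro rfl
      have := hrel (n0 + 1)
      simp only [add_sub_cancel_right, zero_mul] at this
      exact hn0 ((mul_eq_zero.mp this).resolve_left (hnz n0))
    have hlampos : (0 : ℝ) < ‖lam‖ := norm_pos_iff.mpr hlam
    -- square-summability ⇒ only finitely many large coefficients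
    have decay : ∀ c : ℝ, 0 < c → {n : ℤ | c ≤ ‖a n‖}.Finite := by
      intro c hc
      have hsum : Summable (fun n : ℤ => ‖a n‖ ^ ((2 : ℝ≥0∞).toReal)) :=
        (lp.memℓp (e.repr x)).summable (by norm_num)
      have ht := hsum.tendsto_cofinite_zero
      have hev : ∀ᶠ n in cofinite, ‖a n‖ ^ ((2 : ℝ≥0∞).toReal) < c ^ ((2 : ℝ≥0∞).toReal) := by
        refine ht.eventually_lt_const ?_
        exact Real.rpow_pos_of_pos hc _
      refine (Filter.eventually_cofinite.mp hev).subset ?_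
      intro n hn
      simp only [Set.mem_setOf_eq] at hn ⊢
      intro hlt
      exact absurd (Real.rpow_le_rpow hc.le hn (by norm_num)) (not_le.mpr hlt)
    -- nonvanishing propagates forward
    have hfwd : ∀ n : ℤ, n0 ≤ n → a n ≠ 0 := by
      intro n hn
      refine Int.le_induction (motive := fun n _ => a n ≠ 0) hn0 (fun k _ ih => ?_) n hn
      have h := hrel (k + 1)
      simp only [add_sub_cancel_right] at h
      intro h0
      rw [h0, mul_zero] at h
      exact (mul_ne_zero (hnz k) ih) h
    by_cases hA : ∃ n1 : ℤ, n0 ≤ n1 ∧ ‖lam‖ ≤ ‖β n1‖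
    · -- forward blow-up
      obtain ⟨n1, hn1, hβ1⟩ := hA
      have ha1 : a n1 ≠ 0 := hfwd n1 hn1
      have hc1 : (0 : ℝ) < ‖a n1‖ := norm_pos_iff.mpr ha1
      have grow : ∀ n : ℤ, n1 ≤ n → ‖a n1‖ ≤ ‖a n‖ := by
        intro n hn
        refine Int.le_induction (motive := fun n _ => ‖a n1‖ ≤ ‖a n‖) le_rfl (fun k hk ih => ?_) n hn
        have h := hrel (k + 1)
        simp only [add_sub_cancel_right] at h
        have hnorm : ‖β k‖ * ‖a k‖ = ‖lam‖ * ‖a (k + 1)‖ := by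
          rw [← norm_mul, ← norm_mul, h]
        have hβk : ‖lam‖ ≤ ‖β k‖ := hβ1.trans (monoβ n1 k hk)
        have : ‖lam‖ * ‖a k‖ ≤ ‖lam‖ * ‖a (k + 1)‖ := by
          calc ‖lam‖ * ‖a k‖ ≤ ‖β k‖ * ‖a k‖ := by
                exact mul_le_mul_of_nonneg_right hβk (norm_nonneg _)
            _ = ‖lam‖ * ‖a (k + 1)‖ := hnorm
        exact ih.trans (le_of_mul_le_mul_left this hlampos)
      have hsub : Set.Ici n1 ⊆ {n : ℤ | ‖a n1‖ ≤ ‖a n‖} := fun n hn => grow n hn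
      exact Set.Ici_infinite n1 ((decay _ hc1).subset hsub)
    · -- backward blow-up
      push_neg at hA
      have hβsmall : ∀ n : ℤ, ‖β n‖ < ‖lam‖ := by
        intro n
        rcases le_or_gt n0 n with h | h
        · exact hA n h
        · exact lt_of_le_of_lt (monoβ n n0 h.le) (hA n0 le_rfl)
      have hc0 : (0 : ℝ) < ‖a n0‖ := norm_pos_iff.mpr hn0
      have grow : ∀ n : ℤ, n ≤ n0 → a n ≠ 0 ∧ ‖a n0‖ ≤ ‖a n‖ := by
        intro n hn
        refine Int.le_induction_down (motive := fun n _ => a n ≠ 0 ∧ ‖a n0‖ ≤ ‖a n‖) ⟨hn0, le_rfl⟩ (fun k _ ih => ?_) n hn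
        obtain ⟨ihnz, ihle⟩ := ih
        have h := hrel k
        have hanz : a (k - 1) ≠ 0 := by
          intro h0
          rw [h0, mul_zero] at h
          exact (mul_ne_zero hlam ihnz) h.symm
        refine ⟨hanz, ?_⟩
        have hnorm : ‖β (k - 1)‖ * ‖a (k - 1)‖ = ‖lam‖ * ‖a k‖ := by
          rw [← norm_mul, ← norm_mul, h]
        have hβk : ‖β (k - 1)‖ < ‖lam‖ := hβsmall (k - 1)
        have hβpos : (0 : ℝ) < ‖β (k - 1)‖ := norm_pos_iff.mpr (hnz (k - 1))
        have : ‖β (k - 1)‖ * ‖a k‖ ≤ ‖β (k - 1)‖ * ‖a (k - 1)‖ := by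
          calc ‖β (k - 1)‖ * ‖a k‖ ≤ ‖lam‖ * ‖a k‖ := by
                exact mul_le_mul_of_nonneg_right hβk.le (norm_nonneg _)
            _ = ‖β (k - 1)‖ * ‖a (k - 1)‖ := hnorm.symm
        exact ihle.trans (le_of_mul_le_mul_left this hβpos)
      have hsub : Set.Iic n0 ⊆ {n : ℤ | ‖a n0‖ ≤ ‖a n‖} := fun n hn => (grow n hn).2
      exact Set.Iic_infinite n0 ((decay _ hc0).subset hsub)
  constructor
  · intro lam
    ext y
    simp only [LinearMap.mem_ker, ContinuousLinearMap.coe_coe, ContinuousLinearMap.coe_sub', Pi.sub_apply,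
      ContinuousLinearMap.coe_smul', Pi.smul_apply, ContinuousLinearMap.one_apply,
      Submodule.mem_bot]
    constructor
    · intro h
      exact main lam y (by rw [← sub_eq_zero]; rw [sub_eq_zero] at h ⊢; exact h.symm)
    · rintro rfl
      simp
  · ext lam
    simp only [Set.mem_setOf_eq, Set.mem_empty_iff_false, iff_false, not_exists]
    rintro x ⟨hx0, hx⟩
    exact hx0 (main lam x hx)
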